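/- For every x ≥ 0, the second central moment satisfies M_n^{(α,β)}[t ↦ (t − x)^2](x) = ((α+1)(α+2) + 2x(n + β(α+1)) + β^2 x^2) / (n − β)^2. -/

import Mathlib

open MeasureTheory Real Filter

/-- The Szász–Mirakyan basis functions `ψ_{n,k}(x) = e^{-nx} (nx)^k / k!`. -/
noncomputable def psi (n k : ℕ) (x : ℝ) : ℝ :=
  Real.exp (-(n * x)) * (n * x) ^ k / (Nat.factorial k)

/-- The Szász–Mirakyan–Laguerre–Durrmeyer operator `M_n^{(α,β)}`. -/
noncomputable def M (α β : ℝ) (n : ℕ) (f : ℝ → ℝ) (x : ℝ) : ℝ :=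
  ∑' k : ℕ, (((n : ℝ) - β) ^ ((k : ℝ) + α + 1) / Real.Gamma ((k : ℝ) + α + 1)) *
    (∫ t in Set.Ioi (0 : ℝ), f t * t ^ ((k : ℝ) + α) * Real.exp (-((n : ℝ) - β) * t)) *
    psi n k x

/-- The `r`-th moment `μ_r^{(α,β)}(x) = M_n^{(α,β)}[t ↦ t^r](x)`. -/
noncomputable def mu (α β : ℝ) (n : ℕ) (r : ℕ) (x : ℝ) : ℝ :=
  M α β n (fun t => t ^ r) x

open scoped Nat

lemma expsum (y : ℝ) : ∑' k : ℕ, y ^ k / k ! = Real.exp y := by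
  rw [Real.exp_eq_exp_ℝ]
  exact ((NormedSpace.expSeries_div_hasSum_exp y).tsum_eq)

lemma summable0 (y : ℝ) : Summable (fun k : ℕ => y ^ k / k !) :=
  Real.summable_pow_div_factorial y

lemma shift1 (y : ℝ) (k : ℕ) :
    ((k + 1 : ℕ) : ℝ) * y ^ (k + 1) / ((k + 1)! : ℝ) = y * (y ^ k / k !) := by
  rw [Nat.factorial_succ]
  push_cast
  have h1 : ((k ! : ℝ)) ≠ 0 := Nat.cast_ne_zero.mpr (Nat.factorial_ne_zero k)
  have h2 : ((k : ℝ) + 1) ≠ 0 := by positivity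
  field_simp
  ring

lemma summable1 (y : ℝ) : Summable (fun k : ℕ => (k : ℝ) * y ^ k / k !) := by
  have hs : Summable (fun k : ℕ => ((k + 1 : ℕ) : ℝ) * y ^ (k + 1) / ((k + 1)! : ℝ)) :=
    ((summable0 y).mul_left y).congr fun k => (shift1 y k).symm
  exact (summable_nat_add_iff (f := fun k : ℕ => (k : ℝ) * y ^ k / k !) 1).mp hs

lemma sum1 (y : ℝ) : ∑' k : ℕ, (k : ℝ) * y ^ k / k ! = y * Real.exp y := by
  rw [Summable.tsum_eq_zero_add (summable1 y)]
  have : ∑' k : ℕ, ((k + 1 : ℕ) : ℝ) * y ^ (k + 1) / ((k + 1)! : ℝ)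
      = ∑' k : ℕ, y * (y ^ k / k !) := tsum_congr fun k => shift1 y k
  rw [this, tsum_mul_left, expsum]
  norm_num

lemma shift2 (y : ℝ) (k : ℕ) :
    ((k + 2 : ℕ) : ℝ) * (((k + 2 : ℕ) : ℝ) - 1) * y ^ (k + 2) / ((k + 2)! : ℝ)
      = y ^ 2 * (y ^ k / k !) := by
  have h : (k + 2)! = (k + 2) * ((k + 1) * k !) := by
    rw [← Nat.factorial_succ, ← Nat.factorial_succ]
  rw [h]
  push_cast
  have h1 : ((k ! : ℝ)) ≠ 0 := Nat.cast_ne_zero.mpr (Nat.factorial_ne_zero k)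
  have h2 : ((k : ℝ) + 1) ≠ 0 := by positivity
  have h3 : ((k : ℝ) + 2) ≠ 0 := by positivity
  field_simp
  ring

lemma summable2 (y : ℝ) :
    Summable (fun k : ℕ => (k : ℝ) * ((k : ℝ) - 1) * y ^ k / k !) := by
  have hs : Summable (fun k : ℕ =>
      ((k + 2 : ℕ) : ℝ) * (((k + 2 : ℕ) : ℝ) - 1) * y ^ (k + 2) / ((k + 2)! : ℝ)) :=
    ((summable0 y).mul_left (y ^ 2)).congr fun k => (shift2 y k).symm
  exact (summable_nat_add_iff
    (f := fun k : ℕ => (k : ℝ) * ((k : ℝ) - 1) * y ^ k / k !) 2).mp hs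

lemma sum2 (y : ℝ) :
    ∑' k : ℕ, (k : ℝ) * ((k : ℝ) - 1) * y ^ k / k ! = y ^ 2 * Real.exp y := by
  set f : ℕ → ℝ := fun k => (k : ℝ) * ((k : ℝ) - 1) * y ^ k / k ! with hf
  have hsum1 : Summable (fun k : ℕ => f (k + 1)) :=
    (summable_nat_add_iff 1).mpr (summable2 y)
  rw [Summable.tsum_eq_zero_add (summable2 y), Summable.tsum_eq_zero_add hsum1]
  have h1 : f (0 + 1) = 0 := by simp [hf]
  have h2 : ∑' k : ℕ, f (k + 1 + 1) = ∑' k : ℕ, y ^ 2 * (y ^ k / k !) :=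
    tsum_congr fun k => shift2 y k
  rw [h1, h2, tsum_mul_left, expsum]
  norm_num

-- psi facts
lemma psi_eq (n k : ℕ) (x : ℝ) :
    psi n k x = Real.exp (-((n : ℝ) * x)) * (((n : ℝ) * x) ^ k / k !) := by
  rw [psi, mul_div_assoc]

lemma exp_cancel (y : ℝ) : Real.exp (-y) * Real.exp y = 1 := by
  rw [← Real.exp_add]; simp

lemma psi_summable0 (n : ℕ) (x : ℝ) : Summable (fun k : ℕ => psi n k x) := by
  refine ((summable0 ((n : ℝ) * x)).mul_left (Real.exp (-((n : ℝ) * x)))).congr fun k => ?_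
  rw [psi_eq]

lemma psi_summable1 (n : ℕ) (x : ℝ) : Summable (fun k : ℕ => (k : ℝ) * psi n k x) := by
  refine ((summable1 ((n : ℝ) * x)).mul_left (Real.exp (-((n : ℝ) * x)))).congr fun k => ?_
  rw [psi_eq]; ring

lemma psi_summable2 (n : ℕ) (x : ℝ) :
    Summable (fun k : ℕ => (k : ℝ) * ((k : ℝ) - 1) * psi n k x) := by
  refine ((summable2 ((n : ℝ) * x)).mul_left (Real.exp (-((n : ℝ) * x)))).congr fun k => ?_
  rw [psi_eq]; ring

lemma psi_sum0 (n : ℕ) (x : ℝ) : ∑' k : ℕ, psi n k x = 1 := by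
  have : ∑' k : ℕ, psi n k x
      = ∑' k : ℕ, Real.exp (-((n : ℝ) * x)) * (((n : ℝ) * x) ^ k / k !) :=
    tsum_congr fun k => psi_eq n k x
  rw [this, tsum_mul_left, expsum, exp_cancel]

lemma psi_sum1 (n : ℕ) (x : ℝ) : ∑' k : ℕ, (k : ℝ) * psi n k x = (n : ℝ) * x := by
  have h : ∑' k : ℕ, (k : ℝ) * psi n k x
      = ∑' k : ℕ, Real.exp (-((n : ℝ) * x)) * ((k : ℝ) * ((n : ℝ) * x) ^ k / k !) :=
    tsum_congr fun k => by rw [psi_eq]; ring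
  rw [h, tsum_mul_left, sum1, ← mul_assoc, mul_comm (Real.exp _), mul_assoc, exp_cancel, mul_one]

lemma psi_sum2 (n : ℕ) (x : ℝ) :
    ∑' k : ℕ, (k : ℝ) * ((k : ℝ) - 1) * psi n k x = ((n : ℝ) * x) ^ 2 := by
  have h : ∑' k : ℕ, (k : ℝ) * ((k : ℝ) - 1) * psi n k x
      = ∑' k : ℕ, Real.exp (-((n : ℝ) * x)) *
          ((k : ℝ) * ((k : ℝ) - 1) * ((n : ℝ) * x) ^ k / k !) :=
    tsum_congr fun k => by rw [psi_eq]; ring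
  rw [h, tsum_mul_left, sum2, ← mul_assoc, mul_comm (Real.exp _), mul_assoc, exp_cancel, mul_one]

/-- The second central moment. -/
theorem stmt_8 (α β : ℝ) (hα : -1 < α) (n : ℕ) (hn : β < n) (x : ℝ) (hx : 0 ≤ x) :
    M α β n (fun t => (t - x) ^ 2) x =
      ((α + 1) * (α + 2) + 2 * x * ((n : ℝ) + β * (α + 1)) + β ^ 2 * x ^ 2) /
        ((n : ℝ) - β) ^ 2 := by
  have hc0 : (0 : ℝ) < (n : ℝ) - β := sub_pos.mpr hn
  set c : ℝ := (n : ℝ) - β with hc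
  -- integrability
  have hInt : ∀ s : ℝ, -1 < s →
      IntegrableOn (fun t : ℝ => t ^ s * Real.exp (-c * t)) (Set.Ioi 0) := by
    intro s hs
    refine (integrableOn_rpow_mul_exp_neg_mul_rpow hs one_pos hc0).congr_fun
      (fun t ht => ?_) measurableSet_Ioi
    simp only [Real.rpow_one]
  -- integral value
  have hI : ∀ s : ℝ, -1 < s →
      (∫ t in Set.Ioi (0 : ℝ), t ^ s * Real.exp (-c * t))
        = (1 / c) ^ (s + 1) * Real.Gamma (s + 1) := by
    intro s hs
    have h := Real.integral_rpow_mul_exp_neg_mul_Ioi (a := s + 1) (by linarith) hc0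
    simp only [add_sub_cancel_right, neg_mul] at h ⊢
    exact h
  -- split the integral
  have hsplit : ∀ k : ℕ,
      (∫ t in Set.Ioi (0 : ℝ), (t - x) ^ 2 * t ^ ((k : ℝ) + α) * Real.exp (-c * t))
        = (∫ t in Set.Ioi (0 : ℝ), t ^ ((k : ℝ) + α + 2) * Real.exp (-c * t))
          - 2 * x * (∫ t in Set.Ioi (0 : ℝ), t ^ ((k : ℝ) + α + 1) * Real.exp (-c * t))
          + x ^ 2 * (∫ t in Set.Ioi (0 : ℝ), t ^ ((k : ℝ) + α) * Real.exp (-c * t)) := by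
    intro k
    have hk : (0 : ℝ) ≤ (k : ℝ) := Nat.cast_nonneg k
    have i0 := hInt ((k : ℝ) + α) (by linarith)
    have i1 := hInt ((k : ℝ) + α + 1) (by linarith)
    have i2 := hInt ((k : ℝ) + α + 2) (by linarith)
    have heq : Set.EqOn (fun t : ℝ => (t - x) ^ 2 * t ^ ((k : ℝ) + α) * Real.exp (-c * t))
        (fun t : ℝ => t ^ ((k : ℝ) + α + 2) * Real.exp (-c * t)
          - 2 * x * (t ^ ((k : ℝ) + α + 1) * Real.exp (-c * t))
          + x ^ 2 * (t ^ ((k : ℝ) + α) * Real.exp (-c * t))) (Set.Ioi 0) := by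
      intro t ht
      have ht0 : (0 : ℝ) < t := ht
      have e1 : t ^ ((k : ℝ) + α + 1) = t ^ ((k : ℝ) + α) * t :=
        Real.rpow_add_one (ne_of_gt ht0) _
      have e2 : t ^ ((k : ℝ) + α + 2) = t ^ ((k : ℝ) + α) * t * t := by
        rw [show (k : ℝ) + α + 2 = ((k : ℝ) + α + 1) + 1 by ring,
          Real.rpow_add_one (ne_of_gt ht0), e1]
      simp only
      rw [e1, e2]
      ring
    rw [setIntegral_congr_fun measurableSet_Ioi heq,
      integral_add (f := fun t : ℝ => t ^ ((k : ℝ) + α + 2) * Real.exp (-c * t)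
          - 2 * x * (t ^ ((k : ℝ) + α + 1) * Real.exp (-c * t)))
        (g := fun t : ℝ => x ^ 2 * (t ^ ((k : ℝ) + α) * Real.exp (-c * t)))
        (i2.sub (i1.const_mul (2 * x))) (i0.const_mul (x ^ 2)),
      integral_sub i2 (i1.const_mul (2 * x)), integral_const_mul, integral_const_mul]
  -- per-term simplification
  have hterm : ∀ k : ℕ,
      c ^ ((k : ℝ) + α + 1) / Real.Gamma ((k : ℝ) + α + 1) *
        (∫ t in Set.Ioi (0 : ℝ), (t - x) ^ 2 * t ^ ((k : ℝ) + α) * Real.exp (-c * t)) *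
        psi n k x
      = (((k : ℝ) + α + 1) * ((k : ℝ) + α + 2) / c ^ 2 - 2 * x * ((k : ℝ) + α + 1) / c
          + x ^ 2) * psi n k x := by
    intro k
    have hk : (0 : ℝ) ≤ (k : ℝ) := Nat.cast_nonneg k
    have ha : (0 : ℝ) < (k : ℝ) + α + 1 := by linarith
    rw [hsplit k, hI _ (by linarith), hI _ (by linarith), hI _ (by linarith)]
    have g1 : Real.Gamma ((k : ℝ) + α + 1 + 1)
        = ((k : ℝ) + α + 1) * Real.Gamma ((k : ℝ) + α + 1) :=
      Real.Gamma_add_one (ne_of_gt ha)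
    have g2 : Real.Gamma ((k : ℝ) + α + 2 + 1)
        = ((k : ℝ) + α + 2) * (((k : ℝ) + α + 1) * Real.Gamma ((k : ℝ) + α + 1)) := by
      rw [show (k : ℝ) + α + 2 + 1 = ((k : ℝ) + α + 1 + 1) + 1 by ring,
        Real.Gamma_add_one (by linarith), g1]
      ring
    have p1 : (1 / c) ^ ((k : ℝ) + α + 1 + 1)
        = (1 / c) ^ ((k : ℝ) + α + 1) * (1 / c) :=
      Real.rpow_add_one (one_div_ne_zero hc0.ne') _
    have p2 : (1 / c) ^ ((k : ℝ) + α + 2 + 1)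
        = (1 / c) ^ ((k : ℝ) + α + 1) * (1 / c) * (1 / c) := by
      rw [show (k : ℝ) + α + 2 + 1 = ((k : ℝ) + α + 1 + 1) + 1 by ring,
        Real.rpow_add_one (one_div_ne_zero hc0.ne'), p1]
    have p0 : (1 / c) ^ ((k : ℝ) + α + 1) = (c ^ ((k : ℝ) + α + 1))⁻¹ := by
      rw [one_div, Real.inv_rpow hc0.le]
    rw [g1, g2, p1, p2, p0]
    have hcp : (0 : ℝ) < c ^ ((k : ℝ) + α + 1) := Real.rpow_pos_of_pos hc0 _
    have hΓ : (0 : ℝ) < Real.Gamma ((k : ℝ) + α + 1) := Real.Gamma_pos_of_pos ha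
    field_simp
  -- assemble
  have hM : M α β n (fun t => (t - x) ^ 2) x
      = ∑' k : ℕ, ((((k : ℝ) + α + 1) * ((k : ℝ) + α + 2) / c ^ 2
          - 2 * x * ((k : ℝ) + α + 1) / c + x ^ 2) * psi n k x) := by
    rw [M]
    exact tsum_congr hterm
  rw [hM]
  have hexp : ∀ k : ℕ,
      (((k : ℝ) + α + 1) * ((k : ℝ) + α + 2) / c ^ 2
          - 2 * x * ((k : ℝ) + α + 1) / c + x ^ 2) * psi n k x
        = (1 / c ^ 2) * ((k : ℝ) * ((k : ℝ) - 1) * psi n k x)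
          + (((2 * α + 4) / c ^ 2 - 2 * x / c) * ((k : ℝ) * psi n k x)
            + ((α + 1) * (α + 2) / c ^ 2 - 2 * x * (α + 1) / c + x ^ 2) * psi n k x) :=
    fun k => by ring
  rw [tsum_congr hexp]
  have s2 : Summable (fun k : ℕ => (1 / c ^ 2) * ((k : ℝ) * ((k : ℝ) - 1) * psi n k x)) :=
    (psi_summable2 n x).mul_left _
  have s1 : Summable (fun k : ℕ =>
      ((2 * α + 4) / c ^ 2 - 2 * x / c) * ((k : ℝ) * psi n k x)) :=
    (psi_summable1 n x).mul_left _
  have s0 : Summable (fun k : ℕ =>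
      ((α + 1) * (α + 2) / c ^ 2 - 2 * x * (α + 1) / c + x ^ 2) * psi n k x) :=
    (psi_summable0 n x).mul_left _
  rw [Summable.tsum_add s2 (s1.add s0), Summable.tsum_add s1 s0, tsum_mul_left, tsum_mul_left, tsum_mul_left,
    psi_sum0, psi_sum1, psi_sum2, hc]
  have hne : ((n : ℝ) - β) ≠ 0 := ne_of_gt (sub_pos.mpr hn)
  field_simp
  ring
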